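/- Let F be a non-archimedean local field with ring of integers O and residue field of odd characteristic. Let α₁, α₂, α₃, α₄ be units of O satisfying α₁ + α₂ ≡ α₃ + α₄ and α₁⁻¹ + α₂⁻¹ ≡ α₃⁻¹ + α₄⁻¹ modulo 𝔭^v (i.e. v ≤ v(α₁+α₂−α₃−α₄) and v ≤ v(α₁⁻¹+α₂⁻¹−α₃⁻¹−α₄⁻¹)). Then for every odd integer l, v(α₁^l + α₂^l − α₃^l − α₄^l) ≥ v. If moreover α₁ + α₂ is a unit, this holds for every integer l. -/

import Mathlib

section aux
variable {R : Type*} [CommRing R]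

/-- `TT u v l = u^l + v^l` as element of `R`. -/
def TTaux (u v : Rˣ) (l : ℤ) : R := ((u ^ l : Rˣ) : R) + ((v ^ l : Rˣ) : R)

lemma TTaux_rec (u v : Rˣ) (l : ℤ) :
    TTaux u v (l + 1) = ((u : R) + v) * TTaux u v l - ((u : R) * v) * TTaux u v (l - 1) := by
  have h1 : ((u ^ (l+1) : Rˣ) : R) = ((u ^ l : Rˣ) : R) * u := by
    rw [zpow_add_one, Units.val_mul]
  have h2 : ((v ^ (l+1) : Rˣ) : R) = ((v ^ l : Rˣ) : R) * v := by
    rw [zpow_add_one, Units.val_mul]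
  have h3 : ((u ^ l : Rˣ) : R) = ((u ^ (l-1) : Rˣ) : R) * u := by
    rw [← Units.val_mul, ← zpow_add_one, sub_add_cancel]
  have h4 : ((v ^ l : Rˣ) : R) = ((v ^ (l-1) : Rˣ) : R) * v := by
    rw [← Units.val_mul, ← zpow_add_one, sub_add_cancel]
  simp only [TTaux]
  rw [h1, h2, h3, h4]
  ring

lemma TTaux_rec2 (u v : Rˣ) (l : ℤ) :
    TTaux u v (l + 2) = (((u : R) + v)^2 - 2*((u:R)*v)) * TTaux u v l
      - ((u:R)*v)^2 * TTaux u v (l - 2) := by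
  have a := TTaux_rec u v (l+1)
  rw [show l+1+1 = l+2 by ring, show l+1-1 = l by ring] at a
  have b := TTaux_rec u v l
  have c := TTaux_rec u v (l-1)
  rw [show l-1+1 = l by ring, show l-1-1 = l-2 by ring] at c
  linear_combination a + ((u:R)+v) * b + ((u:R)*v) * c

lemma cancel_sq (p q a b : R) (hpq : p * q = 1) (h : p^2 * a = b) : a = q^2 * b := by
  linear_combination q^2*h - a*(1+p*q)*hpq

lemma ringstep (s s' p p' A A' B B' C C' x y : R)
    (r1 : A = (s^2-2*p)*B - p^2*C) (r2 : A' = (s'^2-2*p')*B' - p'^2*C')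
    (ha : B - B' = 0) (hb : C - C' = 0) (hs : s = s') (hz : s*(p-p') = 0)
    (hx : B' = s*x) (hy : C' = s*y) : A - A' = 0 := by
  subst hs; subst hx; subst hy; subst r1; subst r2
  rw [sub_eq_zero] at ha hb
  rw [ha, hb]
  linear_combination (-2*x - (p+p')*y) * hz

lemma ringstep_bwd (s s' p p' A A' B B' C C' x w : R)
    (r1 : A = (s^2-2*p)*B - p^2*C) (r2 : A' = (s'^2-2*p')*B' - p'^2*C')
    (ha : B - B' = 0) (hA : A - A' = 0) (hs : s = s') (hz : s*(p-p') = 0)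
    (hx : B' = s*x) (hw : A' = s*w) : p^2*p'^2*(C - C') = 0 := by
  subst hs; subst hx; subst hw
  rw [sub_eq_zero] at ha hA
  rw [ha] at r1; rw [hA] at r1
  linear_combination p'^2 * r1 - p^2 * r2 + ((p+p')*(w - s^2*x) + 2*p*p'*x) * hz

theorem core {R : Type*} [CommRing R] (u₁ u₂ u₃ u₄ : Rˣ)
    (hs : (u₁ : R) + u₂ = (u₃ : R) + u₄)
    (hi : ((u₁⁻¹ : Rˣ) : R) + ((u₂⁻¹ : Rˣ) : R) = ((u₃⁻¹ : Rˣ) : R) + ((u₄⁻¹ : Rˣ) : R)) :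
    (∀ l : ℤ, Odd l → TTaux u₁ u₂ l = TTaux u₃ u₄ l) ∧
    (IsUnit ((u₁ : R) + u₂) → ∀ l : ℤ, TTaux u₁ u₂ l = TTaux u₃ u₄ l) := by
  set s : R := (u₁ : R) + u₂ with hsdef
  have e₁ : ((u₁⁻¹ : Rˣ) : R) * u₁ = 1 := Units.inv_mul u₁
  have e₂ : ((u₂⁻¹ : Rˣ) : R) * u₂ = 1 := Units.inv_mul u₂
  have e₃ : ((u₃⁻¹ : Rˣ) : R) * u₃ = 1 := Units.inv_mul u₃
  have e₄ : ((u₄⁻¹ : Rˣ) : R) * u₄ = 1 := Units.inv_mul u₄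
  have hps : s * ((u₃:R) * u₄) = ((u₃:R) + u₄) * ((u₁:R) * u₂) := by
    rw [hsdef]
    linear_combination ((u₁:R)*u₂*u₃*u₄) * hi - (u₂:R)*u₃*u₄*e₁ - (u₁:R)*u₃*u₄*e₂
      + (u₁:R)*u₂*u₄*e₃ + (u₁:R)*u₂*u₃*e₄
  have hz : s * ((u₁:R)*u₂ - (u₃:R)*u₄) = 0 := by
    linear_combination (-1 : R) * hps + ((u₁:R)*u₂) * hs
  have hq : ((u₁:R)*u₂) * (((u₁*u₂)⁻¹ : Rˣ) : R) = 1 := by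
    have := Units.mul_inv (u₁*u₂); rwa [Units.val_mul] at this
  have hq' : ((u₃:R)*u₄) * (((u₃*u₄)⁻¹ : Rˣ) : R) = 1 := by
    have := Units.mul_inv (u₃*u₄); rwa [Units.val_mul] at this
  -- values at 1 and -1
  have T1 : TTaux u₁ u₂ (1:ℤ) = s := by simp [TTaux, hsdef]
  have T1' : TTaux u₃ u₄ (1:ℤ) = (u₃:R) + u₄ := by simp [TTaux]
  have Tm1 : TTaux u₁ u₂ (-1:ℤ) = ((u₁⁻¹ : Rˣ) : R) + ((u₂⁻¹ : Rˣ) : R) := by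
    simp [TTaux]
  have Tm1' : TTaux u₃ u₄ (-1:ℤ) = ((u₃⁻¹ : Rˣ) : R) + ((u₄⁻¹ : Rˣ) : R) := by
    simp [TTaux]
  have div1 : TTaux u₃ u₄ (1:ℤ) = s * 1 := by rw [T1', mul_one, hs]
  have divm1 : TTaux u₃ u₄ (-1:ℤ) = s * (((u₁⁻¹ : Rˣ) : R) * ((u₂⁻¹ : Rˣ) : R)) := by
    rw [Tm1', hsdef]
    linear_combination (-1:R) * hi - ((u₁⁻¹ : Rˣ) : R) * e₂ - ((u₂⁻¹ : Rˣ) : R) * e₁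
  constructor
  · -- odd case
    have main : ∀ k : ℤ,
        (TTaux u₁ u₂ (2*k+1) - TTaux u₃ u₄ (2*k+1) = 0 ∧
         TTaux u₁ u₂ (2*k-1) - TTaux u₃ u₄ (2*k-1) = 0) ∧
        ((∃ x, TTaux u₃ u₄ (2*k+1) = s * x) ∧
         (∃ x, TTaux u₃ u₄ (2*k-1) = s * x)) := by
      intro k
      induction k using Int.induction_on with
      | zero =>
        rw [show (2*(0:ℤ)+1) = 1 by norm_num, show (2*(0:ℤ)-1) = -1 by norm_num]
        refine ⟨⟨?_, ?_⟩, ⟨1, div1⟩, ⟨_, divm1⟩⟩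
        · rw [T1, div1, mul_one, sub_self]
        · rw [Tm1, Tm1', hi, sub_self]
      | succ n ih =>
        obtain ⟨⟨d1, d2⟩, ⟨x1, hx1⟩, ⟨x2, hx2⟩⟩ := ih
        rw [show 2*((n:ℤ)+1)+1 = 2*(n:ℤ)+1+2 by ring, show 2*((n:ℤ)+1)-1 = 2*(n:ℤ)+1 by ring]
        have r1 := TTaux_rec2 u₁ u₂ (2*(n:ℤ)+1)
        have r2 := TTaux_rec2 u₃ u₄ (2*(n:ℤ)+1)
        rw [show 2*(n:ℤ)+1-2 = 2*(n:ℤ)-1 by ring] at r1 r2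
        refine ⟨⟨?_, d1⟩,
          ⟨⟨(((u₃:R)+u₄)^2 - 2*((u₃:R)*u₄)) * x1 - ((u₃:R)*u₄)^2 * x2, ?_⟩, ⟨x1, hx1⟩⟩⟩
        · exact ringstep s ((u₃:R)+u₄) ((u₁:R)*u₂) ((u₃:R)*u₄) _ _ _ _ _ _ x1 x2
            r1 r2 d1 d2 hs hz hx1 hx2
        · rw [r2, hx1, hx2]; ring
      | pred n ih =>
        obtain ⟨⟨d1, d2⟩, ⟨x1, hx1⟩, ⟨x2, hx2⟩⟩ := ih
        rw [show 2*(-(n:ℤ)-1)+1 = 2*(-(n:ℤ))-1 by ring, show 2*(-(n:ℤ)-1)-1 = 2*(-(n:ℤ))-3 by ring]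
        have r1 := TTaux_rec2 u₁ u₂ (2*(-(n:ℤ))-1)
        have r2 := TTaux_rec2 u₃ u₄ (2*(-(n:ℤ))-1)
        rw [show 2*(-(n:ℤ))-1+2 = 2*(-(n:ℤ))+1 by ring, show 2*(-(n:ℤ))-1-2 = 2*(-(n:ℤ))-3 by ring]
          at r1 r2
        have key := ringstep_bwd s ((u₃:R)+u₄) ((u₁:R)*u₂) ((u₃:R)*u₄)
          (TTaux u₁ u₂ (2*(-(n:ℤ))+1)) (TTaux u₃ u₄ (2*(-(n:ℤ))+1))
          (TTaux u₁ u₂ (2*(-(n:ℤ))-1)) (TTaux u₃ u₄ (2*(-(n:ℤ))-1))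
          (TTaux u₁ u₂ (2*(-(n:ℤ))-3)) (TTaux u₃ u₄ (2*(-(n:ℤ))-3)) x2 x1
          r1 r2 d2 d1 hs hz hx2 hx1
        have key2 : ((((u₁*u₂)*(u₃*u₄))^2 : Rˣ) : R) *
            (TTaux u₁ u₂ (2*(-(n:ℤ))-3) - TTaux u₃ u₄ (2*(-(n:ℤ))-3)) = 0 := by
          push_cast
          linear_combination key
        have dnew := (Units.mul_right_eq_zero _).mp key2
        have divnew : TTaux u₃ u₄ (2*(-(n:ℤ))-3)
            = s * ((((u₃*u₄)⁻¹ : Rˣ) : R)^2 *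
              (((((u₃:R)+u₄)^2 - 2*((u₃:R)*u₄)) * x2 - x1))) := by
          have hb : ((u₃:R)*u₄)^2 * TTaux u₃ u₄ (2*(-(n:ℤ))-3)
              = s * ((((u₃:R)+u₄)^2 - 2*((u₃:R)*u₄)) * x2 - x1) := by
            rw [hx1, hx2] at r2
            linear_combination r2
          have := cancel_sq ((u₃:R)*u₄) (((u₃*u₄)⁻¹ : Rˣ) : R) _ _ hq' hb
          rw [this]; ring
        exact ⟨⟨d2, dnew⟩, ⟨x2, hx2⟩, ⟨_, divnew⟩⟩
    intro l hl
    obtain ⟨k, hk⟩ := hl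
    have hk' : l = 2*k+1 := by omega
    subst hk'
    exact sub_eq_zero.mp (main k).1.1
  · -- all-l case, s a unit
    intro hsu l
    obtain ⟨w, hw⟩ := hsu
    have hp : ((u₁:R)*u₂) = (u₃:R)*u₄ := by
      have : (w : R) * ((u₁:R)*u₂ - (u₃:R)*u₄) = 0 := by rw [hw]; exact hz
      exact sub_eq_zero.mp ((Units.mul_right_eq_zero _).mp this)
    have main : ∀ l : ℤ, TTaux u₁ u₂ l - TTaux u₃ u₄ l = 0 ∧
        TTaux u₁ u₂ (l-1) - TTaux u₃ u₄ (l-1) = 0 := by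
      intro l
      induction l using Int.induction_on with
      | zero =>
        constructor
        · simp [TTaux]
        · norm_num
          rw [Tm1, Tm1', hi, sub_self]
      | succ n ih =>
        obtain ⟨d1, d2⟩ := ih
        rw [show (n:ℤ)+1-1 = (n:ℤ) by ring]
        refine ⟨?_, d1⟩
        have r1 := TTaux_rec u₁ u₂ (n:ℤ)
        have r2 := TTaux_rec u₃ u₄ (n:ℤ)
        linear_combination r1 - r2 + s * d1 - ((u₁:R)*u₂) * d2
          + TTaux u₃ u₄ (n:ℤ) * hs - TTaux u₃ u₄ ((n:ℤ)-1) * hp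
      | pred n ih =>
        obtain ⟨d1, d2⟩ := ih
        rw [show -(n:ℤ)-1-1 = -(n:ℤ)-2 by ring]
        refine ⟨d2, ?_⟩
        have r1 := TTaux_rec u₁ u₂ (-(n:ℤ)-1)
        have r2 := TTaux_rec u₃ u₄ (-(n:ℤ)-1)
        rw [show -(n:ℤ)-1+1 = -(n:ℤ) by ring, show -(n:ℤ)-1-1 = -(n:ℤ)-2 by ring] at r1 r2
        have key : ((u₁:R)*u₂) *
            (TTaux u₁ u₂ (-(n:ℤ)-2) - TTaux u₃ u₄ (-(n:ℤ)-2)) = 0 := by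
          linear_combination r1 - r2 - d1 + s * d2 + TTaux u₃ u₄ (-(n:ℤ)-1) * hs
            - TTaux u₃ u₄ (-(n:ℤ)-2) * hp
        have key2 : (((u₁*u₂ : Rˣ)) : R) *
            (TTaux u₁ u₂ (-(n:ℤ)-2) - TTaux u₃ u₄ (-(n:ℤ)-2)) = 0 := by
          push_cast; linear_combination key
        exact (Units.mul_right_eq_zero _).mp key2
    exact sub_eq_zero.mp (main l).1
end aux

/-- Lemma "elementary" (Lemma 12.3 in the paper): for units `α₁, α₂, α₃, α₄` of the ring of
integers `O` of a non-archimedean local field with odd residue characteristic, if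
`α₁ + α₂ ≡ α₃ + α₄` and `α₁⁻¹ + α₂⁻¹ ≡ α₃⁻¹ + α₄⁻¹` modulo `𝔭^v`, then
`α₁^l + α₂^l ≡ α₃^l + α₄^l (mod 𝔭^v)` for all odd integers `l`; and if moreover `α₁ + α₂` is a
unit, then this holds for every integer `l`. -/
theorem stmt_0 {O : Type*} [CommRing O] [IsDomain O] [IsLocalRing O]
    [IsDiscreteValuationRing O]
    (hodd : (2 : O) ∉ IsLocalRing.maximalIdeal O)
    (vv : ℕ) (α₁ α₂ α₃ α₄ : Oˣ)
    (h₁ : ((α₁ : O) + α₂ - α₃ - α₄) ∈ (IsLocalRing.maximalIdeal O) ^ vv)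
    (h₂ : ((↑(α₁⁻¹) : O) + ↑(α₂⁻¹) - ↑(α₃⁻¹) - ↑(α₄⁻¹)) ∈ (IsLocalRing.maximalIdeal O) ^ vv) :
    (∀ l : ℤ, Odd l →
      ((↑(α₁ ^ l) : O) + ↑(α₂ ^ l) - ↑(α₃ ^ l) - ↑(α₄ ^ l)) ∈ (IsLocalRing.maximalIdeal O) ^ vv) ∧
    (IsUnit ((α₁ : O) + α₂) →
      ∀ l : ℤ,
      ((↑(α₁ ^ l) : O) + ↑(α₂ ^ l) - ↑(α₃ ^ l) - ↑(α₄ ^ l)) ∈ (IsLocalRing.maximalIdeal O) ^ vv) := by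

  set I := (IsLocalRing.maximalIdeal O) ^ vv with hI
  let f : O →+* O ⧸ I := Ideal.Quotient.mk I
  let g : Oˣ →* (O ⧸ I)ˣ := Units.map (f : O →* O ⧸ I)
  have hcoe : ∀ α : Oˣ, ((g α : (O ⧸ I)ˣ) : O ⧸ I) = f (α : O) := fun α => rfl
  have hmem : ∀ x : O, x ∈ I ↔ f x = 0 := fun x => (Ideal.Quotient.eq_zero_iff_mem).symm
  have hgoal : ∀ l : ℤ, (TTaux (g α₁) (g α₂) l = TTaux (g α₃) (g α₄) l) →
      ((↑(α₁ ^ l) : O) + ↑(α₂ ^ l) - ↑(α₃ ^ l) - ↑(α₄ ^ l)) ∈ I := by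
    intro l h
    rw [hmem]
    have c1 : ∀ α : Oˣ, f ((α ^ l : Oˣ) : O) = ((g α ^ l : (O ⧸ I)ˣ) : O ⧸ I) := by
      intro α
      rw [← map_zpow g α l, hcoe]
    simp only [map_sub, map_add, c1]
    simp only [TTaux] at h
    linear_combination h
  have hs : ((g α₁ : (O ⧸ I)ˣ) : O ⧸ I) + ((g α₂ : (O ⧸ I)ˣ) : O ⧸ I)
      = ((g α₃ : (O ⧸ I)ˣ) : O ⧸ I) + ((g α₄ : (O ⧸ I)ˣ) : O ⧸ I) := by
    have h := (hmem _).mp h₁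
    simp only [map_sub, map_add] at h
    simp only [hcoe]
    linear_combination h
  have hi : (((g α₁)⁻¹ : (O ⧸ I)ˣ) : O ⧸ I) + (((g α₂)⁻¹ : (O ⧸ I)ˣ) : O ⧸ I)
      = (((g α₃)⁻¹ : (O ⧸ I)ˣ) : O ⧸ I) + (((g α₄)⁻¹ : (O ⧸ I)ˣ) : O ⧸ I) := by
    have h := (hmem _).mp h₂
    simp only [map_sub, map_add] at h
    have c2 : ∀ α : Oˣ, (((g α)⁻¹ : (O ⧸ I)ˣ) : O ⧸ I) = f ((α⁻¹ : Oˣ) : O) := by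
      intro α
      rw [← map_inv g α, hcoe]
    simp only [c2]
    linear_combination h
  obtain ⟨codd, call⟩ := core (g α₁) (g α₂) (g α₃) (g α₄) hs hi
  constructor
  · intro l hl
    exact hgoal l (codd l hl)
  · intro hsu l
    refine hgoal l (call ?_ l)
    have : IsUnit (f ((α₁ : O) + α₂)) := hsu.map f
    rw [map_add] at this
    simpa only [hcoe] using this
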